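/- Let Q be a finite symmetric quiver, γ,γ' ∈ ℤ_{≥0}^I, f ∈ ℋ_γ, f' ∈ ℋ_{γ'}. Then the shuffle products satisfy f·f' = (−1)^{χ_Q(γ,γ')} f'·f. -/

import Mathlib

open MvPolynomial

namespace COHA

variable {I : Type} [Fintype I] [DecidableEq I]

/-- Variables `x_{i,α}`, `i ∈ I`, `1 ≤ α ≤ γ i`. -/
abbrev Vars (γ : I → ℕ) : Type := Σ i : I, Fin (γ i)

/-- The polynomial ring `A_γ = ℚ[x_{i,α}]`. -/
abbrev Amod (γ : I → ℕ) : Type := MvPolynomial (Vars γ) ℚ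

/-- A tuple of permutations `σ ∈ P_γ = ∏_i S_{γ^i}` acting on the variables. -/
def permEquiv {γ : I → ℕ} (σ : ∀ i, Equiv.Perm (Fin (γ i))) : Vars γ ≃ Vars γ :=
  Equiv.sigmaCongrRight σ

/-- Invariance under `P_γ`; `ℋ_γ = {f | IsSym f}`. -/
def IsSym {γ : I → ℕ} (f : Amod γ) : Prop :=
  ∀ σ : ∀ i, Equiv.Perm (Fin (γ i)), rename (permEquiv σ) f = f

/-- The Euler form of the quiver with `a i j` arrows from `i` to `j`. -/
def chi (a : I → I → ℕ) (γ₁ γ₂ : I → ℕ) : ℤ :=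
  ∑ i : I, (γ₁ i : ℤ) * (γ₂ i : ℤ) - ∑ i : I, ∑ j : I, (a i j : ℤ) * (γ₁ i : ℤ) * (γ₂ j : ℤ)

/-- `σ_γ`, the sum of all variables. -/
noncomputable def sigmaP (γ : I → ℕ) : Amod γ := ∑ v : Vars γ, X v

/-- Identification of variable sets coming from an equality of dimension vectors. -/
def castV {γ γ' : I → ℕ} (h : γ = γ') : Vars γ ≃ Vars γ' :=
  Equiv.sigmaCongrRight fun i => finCongr (congrFun h i)

/-- Identification of polynomial rings coming from an equality of dimension vectors. -/
noncomputable def castA {γ γ' : I → ℕ} (h : γ = γ') : Amod γ → Amod γ' :=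
  rename (castV h)

/-- `ℋ_γ` as a `ℚ`-submodule of `A_γ`. -/
noncomputable def Hsub (γ : I → ℕ) : Submodule ℚ (Amod γ) where
  carrier := {f | IsSym f}
  add_mem' := fun {f g} hf hg σ => by rw [map_add, hf σ, hg σ]
  zero_mem' := fun σ => map_zero _
  smul_mem' := fun c f hf σ => by rw [map_smul, hf σ]

/-- `ℋ_γ` as a `ℚ`-subalgebra of `A_γ`. -/
noncomputable def Halg (γ : I → ℕ) : Subalgebra ℚ (Amod γ) where
  carrier := {f | IsSym f}
  mul_mem' := fun {f g} hf hg σ => by rw [map_mul, hf σ, hg σ]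
  one_mem' := fun σ => map_one _
  add_mem' := fun {f g} hf hg σ => by rw [map_add, hf σ, hg σ]
  zero_mem' := fun σ => map_zero _
  algebraMap_mem' := fun r σ => by
    simp [MvPolynomial.algebraMap_eq]
/-- Inclusion of the first block of variables. -/
def inlV {γ₁ γ₂ : I → ℕ} : Vars γ₁ → Vars (γ₁ + γ₂) :=
  fun v => ⟨v.1, Fin.castAdd (γ₂ v.1) v.2⟩

/-- Inclusion of the second block of variables. -/
def inrV {γ₁ γ₂ : I → ℕ} : Vars γ₂ → Vars (γ₁ + γ₂) :=
  fun v => ⟨v.1, Fin.natAdd (γ₁ v.1) v.2⟩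

/-- The numerator `∏_{i,j} ∏_{α₁,α₂} (x''_{j,α₂} - x'_{i,α₁})^(a i j)` of the
Kontsevich–Soibelman kernel. -/
noncomputable def shuffleNum (a : I → I → ℕ) (γ₁ γ₂ : I → ℕ) : Amod (γ₁ + γ₂) :=
  ∏ i : I, ∏ j : I, ∏ α₁ : Fin (γ₁ i), ∏ α₂ : Fin (γ₂ j),
    (X (inrV (γ₁ := γ₁) ⟨j, α₂⟩) - X (inlV (γ₂ := γ₂) ⟨i, α₁⟩)) ^ (a i j)

/-- The denominator `∏_i ∏_{α₁,α₂} (x''_{i,α₂} - x'_{i,α₁})` of the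
Kontsevich–Soibelman kernel. -/
noncomputable def shuffleDen (γ₁ γ₂ : I → ℕ) : Amod (γ₁ + γ₂) :=
  ∏ i : I, ∏ α₁ : Fin (γ₁ i), ∏ α₂ : Fin (γ₂ i),
    (X (inrV (γ₁ := γ₁) ⟨i, α₂⟩) - X (inlV (γ₂ := γ₂) ⟨i, α₁⟩))

/-- `σ` is an `(n₁, n₂)`-shuffle: it is increasing on the two blocks. -/
def IsShuffle (n₁ n₂ : ℕ) (σ : Equiv.Perm (Fin (n₁ + n₂))) : Prop :=
  (∀ p q : Fin n₁, p < q → σ (Fin.castAdd n₂ p) < σ (Fin.castAdd n₂ q)) ∧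
  (∀ p q : Fin n₂, p < q → σ (Fin.natAdd n₁ p) < σ (Fin.natAdd n₁ q))

open Classical in
/-- The sum, over all tuples of shuffles, of the permuted rational functions
`f₁(x') f₂(x'') ∏ (x''-x')^(a i j) / ∏ (x''-x')`, as an element of the fraction
field of `A_{γ₁+γ₂}`. -/
noncomputable def shuffleSum (a : I → I → ℕ) (γ₁ γ₂ : I → ℕ)
    (f₁ : Amod γ₁) (f₂ : Amod γ₂) : FractionRing (Amod (γ₁ + γ₂)) :=
  ∑ σ : ∀ i : I, Equiv.Perm (Fin (γ₁ i + γ₂ i)),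
    if ∀ i : I, IsShuffle (γ₁ i) (γ₂ i) (σ i) then
      algebraMap (Amod (γ₁ + γ₂)) _
          (rename (permEquiv (γ := γ₁ + γ₂) σ)
            (rename (inlV (γ₂ := γ₂)) f₁ * rename (inrV (γ₁ := γ₁)) f₂ *
              shuffleNum a γ₁ γ₂)) /
        algebraMap (Amod (γ₁ + γ₂)) _
          (rename (permEquiv (γ := γ₁ + γ₂) σ) (shuffleDen γ₁ γ₂))
    else 0

open Classical in
/-- The Kontsevich–Soibelman shuffle product `f₁ · f₂ ∈ ℋ_{γ₁+γ₂}`: the unique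
polynomial mapping to `shuffleSum` in the fraction field. -/
noncomputable def shuffleMul (a : I → I → ℕ) {γ₁ γ₂ : I → ℕ}
    (f₁ : Amod γ₁) (f₂ : Amod γ₂) : Amod (γ₁ + γ₂) :=
  if h : ∃ p : Amod (γ₁ + γ₂),
      algebraMap (Amod (γ₁ + γ₂)) (FractionRing (Amod (γ₁ + γ₂))) p =
        shuffleSum a γ₁ γ₂ f₁ f₂
  then h.choose else 0
section Aux

lemma finAddFlip_finAddFlip {m n : ℕ} (x : Fin (m + n)) :
    finAddFlip (finAddFlip x : Fin (n + m)) = x := by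
  refine Fin.addCases (fun p => ?_) (fun p => ?_) x
  · rw [finAddFlip_apply_castAdd, finAddFlip_apply_natAdd]
  · rw [finAddFlip_apply_natAdd, finAddFlip_apply_castAdd]

def permFlipPerm {m n : ℕ} (τ : Equiv.Perm (Fin (m + n))) : Equiv.Perm (Fin (n + m)) :=
  ((finAddFlip : Fin (n + m) ≃ Fin (m + n)).trans τ).trans
    (finCongr (Nat.add_comm m n) : Fin (m + n) ≃ Fin (n + m))

lemma permFlipPerm_apply {m n : ℕ} (τ : Equiv.Perm (Fin (m + n))) (x : Fin (n + m)) :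
    permFlipPerm τ x = finCongr (Nat.add_comm m n) (τ (finAddFlip x)) := rfl

def permFlipEquiv {m n : ℕ} : Equiv.Perm (Fin (m + n)) ≃ Equiv.Perm (Fin (n + m)) where
  toFun := permFlipPerm
  invFun := permFlipPerm
  left_inv τ := by
    ext x
    simp [permFlipPerm_apply, finAddFlip_finAddFlip, Fin.ext_iff]
  right_inv τ := by
    ext x
    simp [permFlipPerm_apply, finAddFlip_finAddFlip, Fin.ext_iff]


lemma finCongr_lt_finCongr {m n : ℕ} (h : m = n) (a b : Fin m) :
    finCongr h a < finCongr h b ↔ a < b := by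
  rw [Fin.lt_def, Fin.lt_def, finCongr_apply, finCongr_apply, Fin.coe_cast, Fin.coe_cast]

lemma isShuffle_permFlipPerm {m n : ℕ} (τ : Equiv.Perm (Fin (m + n))) :
    IsShuffle n m (permFlipPerm τ) ↔ IsShuffle m n τ := by
  have key1 : ∀ p : Fin n, permFlipPerm τ (Fin.castAdd m p) =
      finCongr (Nat.add_comm m n) (τ (Fin.natAdd m p)) := by
    intro p; rw [permFlipPerm_apply, finAddFlip_apply_castAdd]
  have key2 : ∀ p : Fin m, permFlipPerm τ (Fin.natAdd n p) =
      finCongr (Nat.add_comm m n) (τ (Fin.castAdd n p)) := by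
    intro p; rw [permFlipPerm_apply, finAddFlip_apply_natAdd]
  unfold IsShuffle
  simp only [key1, key2]
  simp only [finCongr_lt_finCongr]
  exact ⟨fun ⟨h1, h2⟩ => ⟨h2, h1⟩, fun ⟨h1, h2⟩ => ⟨h2, h1⟩⟩

variable {γ γ' : I → ℕ}

def flipV : Vars (γ' + γ) → Vars (γ + γ') :=
  fun v => ⟨v.1, (finAddFlip : Fin (γ' v.1 + γ v.1) ≃ Fin (γ v.1 + γ' v.1)) v.2⟩

lemma flipV_inlV (v : Vars γ') :
    flipV (γ := γ) (inlV (γ₂ := γ) v) = inrV (γ₁ := γ) v := by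
  simp only [flipV, inlV, inrV, finAddFlip_apply_castAdd]
  exact congrArg (Sigma.mk v.1) (finAddFlip_apply_castAdd _ _)

lemma flipV_inrV (v : Vars γ) :
    flipV (γ := γ) (γ' := γ') (inrV (γ₁ := γ') v) = inlV (γ₂ := γ') v := by
  simp only [flipV, inlV, inrV, finAddFlip_apply_natAdd]
  exact congrArg (Sigma.mk v.1) (finAddFlip_apply_natAdd _ _)

end Aux
section Aux2
variable {γ γ' : I → ℕ}

lemma castA_castA (h1 : γ + γ' = γ' + γ) (h2 : γ' + γ = γ + γ') (p : Amod (γ + γ')) :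
    castA h2 (castA h1 p) = p := by
  unfold castA
  rw [rename_rename]
  rw [show ((castV h2 : Vars (γ' + γ) ≃ Vars (γ + γ')) ∘ castV h1) = id from ?_, rename_id, AlgHom.id_apply]
  funext v
  obtain ⟨i, x⟩ := v
  rfl

lemma rename_flipV_inl (f' : Amod γ') :
    rename (flipV (γ := γ) (γ' := γ')) (rename (inlV (γ₂ := γ)) f') =
      rename (inrV (γ₁ := γ)) f' := by
  rw [rename_rename,
    show (flipV ∘ inlV : Vars γ' → Vars (γ + γ')) = inrV from
      _root_.funext fun v => flipV_inlV v]

lemma rename_flipV_inr (f : Amod γ) :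
    rename (flipV (γ := γ) (γ' := γ')) (rename (inrV (γ₁ := γ')) f) =
      rename (inlV (γ₂ := γ')) f := by
  rw [rename_rename,
    show (flipV ∘ inrV : Vars γ → Vars (γ + γ')) = inlV from
      _root_.funext fun v => flipV_inrV v]

lemma castA_rename_perm (τ : ∀ i, Equiv.Perm (Fin (γ' i + γ i))) (g : Amod (γ' + γ)) :
    castA (add_comm γ' γ) (rename (permEquiv (γ := γ' + γ) τ) g) =
      rename (permEquiv (γ := γ + γ') (fun i => permFlipPerm (τ i)))
        (rename (flipV (γ := γ) (γ' := γ')) g) := by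
  unfold castA
  rw [rename_rename, rename_rename]
  have : ((castV (add_comm γ' γ) : Vars (γ' + γ) ≃ Vars (γ + γ')) ∘
      (permEquiv (γ := γ' + γ) τ)) =
      ((permEquiv (γ := γ + γ') (fun i => permFlipPerm (τ i))) ∘
        (flipV (γ := γ) (γ' := γ'))) := by
    funext v
    obtain ⟨i, x⟩ := v
    show (castV _ ((permEquiv τ) ⟨i, x⟩) : Vars (γ + γ')) =
      (permEquiv (γ := γ + γ') (fun i => permFlipPerm (τ i))) (flipV ⟨i, x⟩)
    exact congrArg
      (fun y : Fin (γ' i + γ i) =>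
        (⟨i, finCongr (Nat.add_comm (γ' i) (γ i)) ((τ i) y)⟩ : Vars (γ + γ')))
      (finAddFlip_finAddFlip x).symm
  rw [this]
end Aux2
section Aux3
variable {γ γ' : I → ℕ}

lemma rename_flipV_num (a : I → I → ℕ) (hsym : ∀ i j : I, a i j = a j i) :
    rename (flipV (γ := γ) (γ' := γ')) (shuffleNum a γ' γ) =
      (-1) ^ (∑ i : I, ∑ j : I, a i j * γ j * γ' i) * shuffleNum a γ γ' := by
  unfold shuffleNum
  simp only [map_prod, map_pow, map_sub, rename_X, flipV_inlV, flipV_inrV]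
  have step : ∀ (i j : I) (α₁ : Fin (γ' i)) (α₂ : Fin (γ j)),
      ((X (inlV (γ₂ := γ') ⟨j, α₂⟩) - X (inrV (γ₁ := γ) ⟨i, α₁⟩) : Amod (γ + γ')) ^ a i j) =
        (-1) ^ a i j * (X (inrV (γ₁ := γ) ⟨i, α₁⟩) - X (inlV (γ₂ := γ') ⟨j, α₂⟩)) ^ a i j := by
    intro i j α₁ α₂
    rw [← neg_sub, neg_pow]
  simp only [step]
  simp only [Finset.prod_mul_distrib, Finset.prod_const, Finset.card_univ, Fintype.card_fin,
    ← pow_mul, Finset.prod_pow_eq_pow_sum]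
  congr 1
  rw [Finset.prod_comm]
  refine Finset.prod_congr rfl fun i _ => Finset.prod_congr rfl fun j _ => ?_
  rw [Finset.prod_comm, hsym j i]

lemma rename_flipV_den :
    rename (flipV (γ := γ) (γ' := γ')) (shuffleDen γ' γ) =
      (-1) ^ (∑ i : I, γ i * γ' i) * shuffleDen γ γ' := by
  unfold shuffleDen
  simp only [map_prod, map_sub, rename_X, flipV_inlV, flipV_inrV]
  have step : ∀ (i : I) (α₁ : Fin (γ' i)) (α₂ : Fin (γ i)),
      ((X (inlV (γ₂ := γ') ⟨i, α₂⟩) - X (inrV (γ₁ := γ) ⟨i, α₁⟩) : Amod (γ + γ'))) =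
        (-1) * (X (inrV (γ₁ := γ) ⟨i, α₁⟩) - X (inlV (γ₂ := γ') ⟨i, α₂⟩)) := by
    intro i α₁ α₂
    rw [← neg_sub, neg_one_mul]
  simp only [step]
  simp only [Finset.prod_mul_distrib, Finset.prod_const, Finset.card_univ, Fintype.card_fin,
    ← pow_mul, Finset.prod_pow_eq_pow_sum]
  congr 1
  refine Finset.prod_congr rfl fun i _ => ?_
  rw [Finset.prod_comm]

lemma neg_one_zpow_chi (a : I → I → ℕ) (hsym : ∀ i j : I, a i j = a j i) (γ γ' : I → ℕ) :
    ((-1 : ℚ) ^ (chi a γ γ')) =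
      (-1 : ℚ) ^ ((∑ i : I, ∑ j : I, a i j * γ j * γ' i) + ∑ i : I, γ i * γ' i) := by
  set S : ℤ := ∑ i : I, ∑ j : I, (a i j : ℤ) * (γ i : ℤ) * (γ' j : ℤ) with hSdef
  set N : ℕ := ∑ i : I, ∑ j : I, a i j * γ j * γ' i with hNdef
  set D : ℕ := ∑ i : I, γ i * γ' i with hDdef
  have hS : S = (N : ℤ) := by
    rw [hSdef, hNdef]
    push_cast
    rw [Finset.sum_comm]
    refine Finset.sum_congr rfl fun j _ => Finset.sum_congr rfl fun i _ => ?_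
    rw [hsym i j]
  have key : chi a γ γ' + (S + S) = ((N + D : ℕ) : ℤ) := by
    rw [chi, hS]
    push_cast
    rw [hDdef]
    push_cast
    rw [← hSdef]
    linarith [hS]
  have hchi : chi a γ γ' = ((N + D : ℕ) : ℤ) - (S + S) := by linarith
  have hne : (-1 : ℚ) ≠ 0 := by norm_num
  have hSS : (-1 : ℚ) ^ (S + S) = 1 := by
    rw [zpow_add₀ hne, ← mul_zpow]
    norm_num
  rw [hchi, zpow_sub₀ hne, hSS, div_one, zpow_natCast]
end Aux3
section Aux4

noncomputable def castRE (γ γ' : I → ℕ) : Amod (γ' + γ) ≃+* Amod (γ + γ') :=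
  (renameEquiv ℚ (castV (add_comm γ' γ))).toRingEquiv

lemma castRE_apply {γ γ' : I → ℕ} (p : Amod (γ' + γ)) :
    castRE γ γ' p = castA (add_comm γ' γ) p := rfl

noncomputable def PhiK (γ γ' : I → ℕ) :
    FractionRing (Amod (γ' + γ)) ≃+* FractionRing (Amod (γ + γ')) :=
  IsFractionRing.ringEquivOfRingEquiv (castRE γ γ')

lemma PhiK_algebraMap {γ γ' : I → ℕ} (p : Amod (γ' + γ)) :
    PhiK γ γ' (algebraMap _ _ p) = algebraMap _ _ (castA (add_comm γ' γ) p) := by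
  rw [PhiK, IsFractionRing.ringEquivOfRingEquiv_algebraMap, castRE_apply]

set_option synthInstance.maxHeartbeats 1000000 in
set_option maxHeartbeats 1000000 in
lemma shuffleSum_flip (a : I → I → ℕ) (hsym : ∀ i j : I, a i j = a j i) (γ γ' : I → ℕ)
    (f : Amod γ) (f' : Amod γ') :
    shuffleSum a γ γ' f f' =
      algebraMap (Amod (γ + γ')) (FractionRing (Amod (γ + γ')))
          (C ((-1 : ℚ) ^ (chi a γ γ'))) *
        PhiK γ γ' (shuffleSum a γ' γ f' f) := by
  classical
  unfold shuffleSum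
  rw [map_sum, Finset.mul_sum]
  refine (Fintype.sum_equiv
    (Equiv.piCongrRight fun i =>
      (permFlipEquiv : Equiv.Perm (Fin (γ' i + γ i)) ≃ Equiv.Perm (Fin (γ i + γ' i))))
    _ _ ?_).symm
  intro τ
  have heτ : (Equiv.piCongrRight fun i =>
      (permFlipEquiv : Equiv.Perm (Fin (γ' i + γ i)) ≃ Equiv.Perm (Fin (γ i + γ' i)))) τ =
      fun i => permFlipPerm (τ i) := rfl
  rw [heτ]
  by_cases hτ : ∀ i : I, IsShuffle (γ' i) (γ i) (τ i)
  · rw [if_pos hτ, if_pos (fun i => (isShuffle_permFlipPerm (τ i)).mpr (hτ i))]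
    rw [map_div₀, PhiK_algebraMap, PhiK_algebraMap, castA_rename_perm, castA_rename_perm]
    simp only [map_mul]
    rw [rename_flipV_inl, rename_flipV_inr, rename_flipV_num a hsym, rename_flipV_den,
      neg_one_zpow_chi a hsym γ γ']
    simp only [map_mul, map_pow, map_neg, map_one]
    set x := algebraMap (Amod (γ + γ')) (FractionRing (Amod (γ + γ')))
      (rename (permEquiv (γ := γ + γ') fun i => permFlipPerm (τ i)) (rename (inrV (γ₁ := γ)) f'))
    set y := algebraMap (Amod (γ + γ')) (FractionRing (Amod (γ + γ')))
      (rename (permEquiv (γ := γ + γ') fun i => permFlipPerm (τ i)) (rename (inlV (γ₂ := γ')) f))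
    set z := algebraMap (Amod (γ + γ')) (FractionRing (Amod (γ + γ')))
      (rename (permEquiv (γ := γ + γ') fun i => permFlipPerm (τ i)) (shuffleNum a γ γ'))
    set w := algebraMap (Amod (γ + γ')) (FractionRing (Amod (γ + γ')))
      (rename (permEquiv (γ := γ + γ') fun i => permFlipPerm (τ i)) (shuffleDen γ γ'))
    set N : ℕ := ∑ i : I, ∑ j : I, a i j * γ j * γ' i
    set D : ℕ := ∑ i : I, γ i * γ' i
    have h1 : (((-1 : FractionRing (Amod (γ + γ'))) ^ D))⁻¹ = (-1) ^ D := by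
      rw [← inv_pow, inv_neg, inv_one]
    have h2 : ((-1 : FractionRing (Amod (γ + γ'))) ^ (N + D)) * ((-1) ^ N * (-1) ^ D) = 1 := by
      rw [← pow_add, ← pow_add]
      exact Even.neg_one_pow ⟨N + D, by ring⟩
    rw [div_eq_mul_inv, div_eq_mul_inv, mul_inv, h1]
    linear_combination (y * x * z * w⁻¹) * h2
  · rw [if_neg hτ, if_neg (fun hc => hτ fun i => (isShuffle_permFlipPerm (τ i)).mp (hc i))]
    rw [map_zero, mul_zero]

end Aux4
/-- **Sign-commutativity of the COHA of a symmetric quiver:**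
`f · f' = (-1)^{χ_Q(γ,γ')} f' · f` (up to the canonical identification
`A_{γ'+γ} ≅ A_{γ+γ'}`). -/
theorem shuffleMul_sign_comm
    (I : Type) [Fintype I] [DecidableEq I] (a : I → I → ℕ)
    (hsym : ∀ i j : I, a i j = a j i)
    (γ γ' : I → ℕ) (f : Amod γ) (f' : Amod γ')
    (h : IsSym f) (h' : IsSym f') :
    shuffleMul a f f' =
      ((-1 : ℚ) ^ (chi a γ γ')) • castA (add_comm γ' γ) (shuffleMul a f' f) := by
  classical
  set c : ℚ := (-1 : ℚ) ^ (chi a γ γ') with hcdef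
  have key := shuffleSum_flip a hsym γ γ' f f'
  rw [← hcdef] at key
  have hc0 : c ≠ 0 := by
    rw [hcdef]
    exact zpow_ne_zero _ (by norm_num)
  unfold shuffleMul
  by_cases h2 : ∃ p : Amod (γ' + γ),
      algebraMap (Amod (γ' + γ)) (FractionRing (Amod (γ' + γ))) p = shuffleSum a γ' γ f' f
  · have h1 : ∃ p : Amod (γ + γ'),
        algebraMap (Amod (γ + γ')) (FractionRing (Amod (γ + γ'))) p =
          shuffleSum a γ γ' f f' := by
      refine ⟨c • castA (add_comm γ' γ) h2.choose, ?_⟩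
      rw [smul_eq_C_mul, map_mul, ← PhiK_algebraMap, h2.choose_spec, ← key]
    rw [dif_pos h1, dif_pos h2]
    apply IsFractionRing.injective (Amod (γ + γ')) (FractionRing (Amod (γ + γ')))
    rw [h1.choose_spec, key, smul_eq_C_mul, map_mul, ← PhiK_algebraMap, h2.choose_spec]
  · have h1 : ¬ ∃ p : Amod (γ + γ'),
        algebraMap (Amod (γ + γ')) (FractionRing (Amod (γ + γ'))) p =
          shuffleSum a γ γ' f f' := by
      rintro ⟨p, hp⟩
      apply h2
      refine ⟨C c⁻¹ * castA (add_comm γ γ') p, ?_⟩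
      apply (PhiK γ γ').injective
      rw [PhiK_algebraMap]
      have hcast : castA (add_comm γ' γ) (C c⁻¹ * castA (add_comm γ γ') p) = C c⁻¹ * p := by
        unfold castA
        rw [map_mul, rename_C]
        congr 1
        exact castA_castA _ _ p
      rw [hcast]
      have hCc : (C c : Amod (γ + γ')) ≠ 0 := fun hh => hc0 (by
        have := congrArg (fun q => MvPolynomial.coeff 0 q) hh
        simpa using this)
      have hMc : (algebraMap (Amod (γ + γ')) (FractionRing (Amod (γ + γ'))) (C c)) ≠ 0 :=
        (map_ne_zero_iff _ (IsFractionRing.injective _ _)).mpr hCc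
      apply mul_left_cancel₀ hMc
      rw [← key, ← hp, ← map_mul, ← mul_assoc, ← map_mul, mul_inv_cancel₀ hc0, map_one, one_mul]
    rw [dif_neg h1, dif_neg h2]
    rw [show castA (add_comm γ' γ) (0 : Amod (γ' + γ)) = 0 by simp [castA], smul_zero]
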